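/- Let φ : A → D be a unital *-homomorphism between unital C*-algebras A and D, and let k ≥ 2 be a natural number. Then φ is full if and only if ι_D^{(k)} ∘ φ : A → M_k(D) is unitizably full, where ι_D^{(k)} : D → M_k(D) is the top-left corner embedding d ↦ diag(d, 0, …, 0). In particular, this holds for some k ≥ 2 if and only if it holds for all k ≥ 2. -/

import Mathlib

/-!
STATEMENT 15: For a unital *-homomorphism `φ : A → D` between unital C*-algebras and
`k ≥ 2`, `φ` is full iff `ι_D^{(k)} ∘ φ : A → M_k(D)` is unitizably full, where
`ι_D^{(k)}(d) = diag(d, 0, …, 0)` is the top-left corner embedding.  (Since this is proved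
for every `k ≥ 2`, it holds for some `k ≥ 2` iff it holds for all `k ≥ 2`.)

Fullness of an element is: the closed two-sided ideal it generates is everything (the
topology on `M_k(D)` is the product topology, which agrees with that of any of the
equivalent norms on `M_k(D)`, in particular the C*-norm).  Unitizable fullness of
`ψ : A → M_k(D)` is encoded by: for all `a ∈ A`, `λ ∈ ℂ` not both zero, the element
`ψ(a) + λ·1` (the image of `a + λ1 ∈ A†` under `ψ†`) is full.
-/

noncomputable section

/-- An element of a topological ring is full if the closed two-sided ideal it generates is
everything. -/
def IsFullElemT {D : Type*} [NonUnitalNonAssocRing D] [TopologicalSpace D] (a : D) : Prop :=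
  closure ((TwoSidedIdeal.span {a} : TwoSidedIdeal D) : Set D) = Set.univ

/-- The closure of a two-sided ideal in a topological ring, as a two-sided ideal. -/
def closureTSI {R : Type*} [Ring R] [TopologicalSpace R] [IsTopologicalRing R]
    (I : TwoSidedIdeal R) : TwoSidedIdeal R :=
  TwoSidedIdeal.mk' (closure (I : Set R))
    (subset_closure I.zero_mem)
    (fun hx hy => map_mem_closure₂ continuous_add hx hy fun _ ha _ hb => I.add_mem ha hb)
    (fun hx => map_mem_closure continuous_neg hx fun _ ha => I.neg_mem ha)
    (fun {x _} hy => map_mem_closure (continuous_mul_left x) hy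
      fun a ha => I.mul_mem_left _ a ha)
    (fun {_ y} hx => map_mem_closure (f := (· * y)) (continuous_mul_right y) hx
      fun a ha => I.mul_mem_right a y ha)

lemma coe_closureTSI {R : Type*} [Ring R] [TopologicalSpace R] [IsTopologicalRing R]
    (I : TwoSidedIdeal R) : ((closureTSI I : TwoSidedIdeal R) : Set R) = closure (I : Set R) :=
  TwoSidedIdeal.coe_mk' _ _ _ _ _ _

lemma mem_closureTSI {R : Type*} [Ring R] [TopologicalSpace R] [IsTopologicalRing R]
    (I : TwoSidedIdeal R) {x : R} :
    x ∈ closureTSI I ↔ x ∈ closure (I : Set R) :=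
  TwoSidedIdeal.mem_mk' _ _ _ _ _ _ _

lemma stdBasisMatrix_neg {k : ℕ} {D : Type*} [Ring D] (i j : Fin k) (x : D) :
    Matrix.single i j (-x) = -(Matrix.single i j x) := by
  ext a b
  by_cases h : i = a ∧ j = b <;> simp [Matrix.single, h]

lemma continuous_stdBasisMatrix {k : ℕ} {D : Type*} [TopologicalSpace D] [Zero D]
    (i j : Fin k) : Continuous fun d : D => Matrix.single i j d := by
  apply continuous_matrix
  intro a b
  simp only [Matrix.single, Matrix.of_apply]
  by_cases h : i = a ∧ j = b
  · simpa [h] using continuous_id'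
  · simpa [h] using continuous_const

theorem statement15
    {A D : Type*} [CStarAlgebra A] [CStarAlgebra D]
    (φ : A →⋆ₐ[ℂ] D) (k : ℕ) (hk : 2 ≤ k) :
    -- `φ` is full
    (∀ a : A, a ≠ 0 → IsFullElemT (φ a)) ↔
    -- iff `ι_D^{(k)} ∘ φ` is unitizably full
    (∀ (a : A) (lam : ℂ), ¬(a = 0 ∧ lam = 0) →
      IsFullElemT
        (Matrix.single (⟨0, by omega⟩ : Fin k) (⟨0, by omega⟩ : Fin k) (φ a) +
          lam • (1 : Matrix (Fin k) (Fin k) D))) := by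
  have hk0 : 0 < k := by omega
  set i0 : Fin k := ⟨0, by omega⟩ with hi0
  set i1 : Fin k := ⟨1, by omega⟩ with hi1
  have h01 : i1 ≠ i0 := by simp [hi0, hi1, Fin.ext_iff]
  constructor
  · -- forward direction
    intro hφ a lam hne
    rcases eq_or_ne lam 0 with rfl | hlam
    · -- lam = 0, a ≠ 0
      have ha : a ≠ 0 := fun h => hne ⟨h, rfl⟩
      have hbfull : closure ((TwoSidedIdeal.span {φ a} : TwoSidedIdeal D) : Set D) =
          Set.univ := hφ a ha
      simp only [zero_smul, add_zero]
      unfold IsFullElemT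
      set IM : TwoSidedIdeal (Matrix (Fin k) (Fin k) D) :=
        TwoSidedIdeal.span {Matrix.single i0 i0 (φ a)} with hIM
      -- the set of `d : D` all of whose std basis matrices lie in `IM` is a two-sided ideal
      set I' : TwoSidedIdeal D := TwoSidedIdeal.mk'
        {d : D | ∀ i j : Fin k, Matrix.single i j d ∈ IM}
        (fun i j => by simpa using IM.zero_mem)
        (fun {x y} hx hy i j => by
          rw [Matrix.single_add]; exact IM.add_mem (hx i j) (hy i j))
        (fun {x} hx i j => by
          rw [stdBasisMatrix_neg]; exact IM.neg_mem (hx i j))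
        (fun {x y} hy i j => by
          have : Matrix.single i j (x * y) =
              Matrix.single i i x * Matrix.single i j y := by
            simp
          rw [this]; exact IM.mul_mem_left _ _ (hy i j))
        (fun {x y} hx i j => by
          have : Matrix.single i j (x * y) =
              Matrix.single i j x * Matrix.single j j y := by
            simp
          rw [this]; exact IM.mul_mem_right _ _ (hx i j)) with hI'
      have hbI' : φ a ∈ I' := by
        rw [hI', TwoSidedIdeal.mem_mk']
        intro i j
        have : Matrix.single i j (φ a) =
            Matrix.single i i0 (1 : D) * Matrix.single i0 i0 (φ a) *
              Matrix.single i0 j (1 : D) := by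
          simp
        rw [this]
        exact IM.mul_mem_right _ _
          (IM.mul_mem_left _ _ (TwoSidedIdeal.subset_span rfl))
      have hspan : ∀ d ∈ (TwoSidedIdeal.span {φ a} : TwoSidedIdeal D),
          ∀ i j : Fin k, Matrix.single i j d ∈ IM := by
        intro d hd
        have : d ∈ I' := TwoSidedIdeal.mem_span_iff.mp hd I' (by
          intro x hx; rw [Set.mem_singleton_iff] at hx; subst hx; exact hbI')
        rwa [hI', TwoSidedIdeal.mem_mk'] at this
      -- now every matrix lies in the closure of IM
      apply Set.eq_univ_of_forall
      intro M
      have hMsum : M = ∑ i : Fin k, ∑ j : Fin k, Matrix.single i j (M i j) :=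
        Matrix.matrix_eq_sum_single M
      have hmem : ∀ i j : Fin k, Matrix.single i j (M i j) ∈ closureTSI IM := by
        intro i j
        rw [mem_closureTSI]
        have hMij : M i j ∈ closure ((TwoSidedIdeal.span {φ a} : TwoSidedIdeal D) : Set D) := by
          rw [hbfull]; trivial
        exact map_mem_closure (continuous_stdBasisMatrix i j) hMij
          (fun d hd => hspan d hd i j)
      have : M ∈ closureTSI IM := by
        rw [hMsum]
        exact sum_mem fun i _ => sum_mem fun j _ => hmem i j
      rwa [mem_closureTSI] at this
    · -- lam ≠ 0 : the ideal contains a corner unit, hence is everything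
      unfold IsFullElemT
      set x : Matrix (Fin k) (Fin k) D :=
        Matrix.single i0 i0 (φ a) + lam • (1 : Matrix (Fin k) (Fin k) D) with hx
      set IM : TwoSidedIdeal (Matrix (Fin k) (Fin k) D) := TwoSidedIdeal.span {x} with hIM
      have hxIM : x ∈ IM := TwoSidedIdeal.subset_span rfl
      have hy : Matrix.single i1 i1 (1 : D) * x * Matrix.single i1 i1 (1 : D)
          = Matrix.single i1 i1 (lam • (1 : D)) := by
        rw [hx, mul_add, add_mul,
          Matrix.single_mul_single_of_ne (c := (1 : D)) (h := h01) (d := φ a), zero_mul, zero_add,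
          mul_smul_comm, mul_one, smul_mul_assoc, Matrix.single_mul_single_same, one_mul,
          Matrix.smul_single]
      have hyIM : Matrix.single i1 i1 (lam • (1 : D)) ∈ IM := by
        rw [← hy]; exact IM.mul_mem_right _ _ (IM.mul_mem_left _ _ hxIM)
      have hzIM : Matrix.single i1 i1 (1 : D) ∈ IM := by
        have : Matrix.single i1 i1 (lam⁻¹ • (1 : D)) *
            Matrix.single i1 i1 (lam • (1 : D)) =
            Matrix.single i1 i1 (1 : D) := by
          rw [Matrix.single_mul_single_same]
          congr 1
          rw [smul_mul_assoc, mul_smul_comm, one_mul, smul_smul, inv_mul_cancel₀ hlam, one_smul]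
        rw [← this]
        exact IM.mul_mem_left _ _ hyIM
      have hall : ∀ (d : D) (i j : Fin k), Matrix.single i j d ∈ IM := by
        intro d i j
        have : Matrix.single i j d =
            Matrix.single i i1 d * Matrix.single i1 i1 (1 : D) *
              Matrix.single i1 j (1 : D) := by
          simp
        rw [this]
        exact IM.mul_mem_right _ _ (IM.mul_mem_left _ _ hzIM)
      apply Set.eq_univ_of_forall
      intro M
      apply subset_closure
      have hMsum : M = ∑ i : Fin k, ∑ j : Fin k, Matrix.single i j (M i j) :=
        Matrix.matrix_eq_sum_single M
      rw [SetLike.mem_coe, hMsum]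
      exact sum_mem fun i _ => sum_mem fun j _ => hall (M i j) i j
  · -- backward direction
    intro h a ha
    have hfull : closure ((TwoSidedIdeal.span
        {Matrix.single i0 i0 (φ a)} :
          TwoSidedIdeal (Matrix (Fin k) (Fin k) D)) : Set (Matrix (Fin k) (Fin k) D)) = Set.univ := by
      have := h a 0 (fun hc => ha hc.1)
      simpa only [IsFullElemT, zero_smul, add_zero] using this
    unfold IsFullElemT
    set J : TwoSidedIdeal D := closureTSI (TwoSidedIdeal.span {φ a}) with hJ
    have hJclosed : IsClosed (J : Set D) := by
      rw [hJ, coe_closureTSI]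
      exact isClosed_closure
    -- matrices with all entries in J form a two-sided ideal
    set S : TwoSidedIdeal (Matrix (Fin k) (Fin k) D) := TwoSidedIdeal.mk'
      {M : Matrix (Fin k) (Fin k) D | ∀ i j : Fin k, M i j ∈ J}
      (fun i j => by simpa using J.zero_mem)
      (fun {x y} hx hy i j => by
        simpa [Matrix.add_apply] using J.add_mem (hx i j) (hy i j))
      (fun {x} hx i j => by simpa [Matrix.neg_apply] using J.neg_mem (hx i j))
      (fun {x y} hy i j => by
        rw [Matrix.mul_apply]
        exact sum_mem fun l _ => J.mul_mem_left _ _ (hy l j))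
      (fun {x y} hx i j => by
        rw [Matrix.mul_apply]
        exact sum_mem fun l _ => J.mul_mem_right _ _ (hx i l)) with hS
    have hSclosed : IsClosed (S : Set (Matrix (Fin k) (Fin k) D)) := by
      rw [hS]; erw [TwoSidedIdeal.coe_mk']
      have : {M : Matrix (Fin k) (Fin k) D | ∀ i j : Fin k, M i j ∈ J} =
          ⋂ i : Fin k, ⋂ j : Fin k, (fun M : Matrix (Fin k) (Fin k) D => M i j) ⁻¹' J := by
        ext M; simp [Set.mem_iInter]
      rw [this]
      exact isClosed_iInter fun i => isClosed_iInter fun j =>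
        hJclosed.preimage (continuous_id.matrix_elem i j)
    have hbS : Matrix.single i0 i0 (φ a) ∈ S := by
      rw [hS]; refine (TwoSidedIdeal.mem_mk' _ _ _ _ _ _ _).mpr ?_
      intro i j
      show (Matrix.single i0 i0 (φ a)) i j ∈ J
      simp only [Matrix.single, Matrix.of_apply]
      split_ifs with hcond
      · exact (mem_closureTSI _).mpr (subset_closure (TwoSidedIdeal.subset_span rfl))
      · exact J.zero_mem
    have hsub : ((TwoSidedIdeal.span {Matrix.single i0 i0 (φ a)} :
        TwoSidedIdeal (Matrix (Fin k) (Fin k) D)) : Set (Matrix (Fin k) (Fin k) D)) ⊆ (S : Set (Matrix (Fin k) (Fin k) D)) := by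
      intro M hM
      rw [SetLike.mem_coe] at hM ⊢
      exact TwoSidedIdeal.mem_span_iff.mp hM S (by
        intro y hy; rw [Set.mem_singleton_iff] at hy; subst hy
        exact SetLike.mem_coe.mpr hbS)
    have hSuniv : (S : Set (Matrix (Fin k) (Fin k) D)) = Set.univ := by
      apply Set.eq_univ_of_univ_subset
      rw [← hfull]
      calc closure ((TwoSidedIdeal.span {Matrix.single i0 i0 (φ a)} :
            TwoSidedIdeal (Matrix (Fin k) (Fin k) D)) : Set (Matrix (Fin k) (Fin k) D))
          ⊆ closure (S : Set (Matrix (Fin k) (Fin k) D)) := closure_mono hsub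
        _ = (S : Set (Matrix (Fin k) (Fin k) D)) := hSclosed.closure_eq
    apply Set.eq_univ_of_forall
    intro d
    have hmemS : Matrix.single i0 i0 d ∈ (S : Set (Matrix (Fin k) (Fin k) D)) := by
      rw [hSuniv]; trivial
    rw [SetLike.mem_coe, hS] at hmemS; replace hmemS := (TwoSidedIdeal.mem_mk' _ _ _ _ _ _ _).mp hmemS
    have hd := hmemS i0 i0
    simp only [Matrix.single, Matrix.of_apply, and_self, if_true] at hd
    rwa [hJ, mem_closureTSI] at hd
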